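/- Let P be an n×n row-stochastic real matrix, let φ be a stationary distribution of P, let P* = 𝟙 φᵀ be the associated limiting matrix, and suppose I − P + P* is invertible. Then the deviation matrix H(α) = (I − α P)⁻¹ − (1 − α)⁻¹ P* tends, as α tends to 1 from below (along discount factors α ∈ [0,1)), to the Drazin-inverse matrix H = (I − P + P*)⁻¹ − P*, which is the zeroth-order coefficient of the truncated Laurent series expansion of the discounted value operator. -/

import Mathlib

open Matrix BigOperators Filter

/-- The deviation matrix H(α) = (I − α P)⁻¹ − (1 − α)⁻¹ P* tends,
as α → 1⁻ along α ∈ [0,1), to the Drazin inverse H = (I − P + P*)⁻¹ − P*. -/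
theorem deviation_matrix_limit {n : ℕ} (hn : 1 ≤ n)
    (P : Matrix (Fin n) (Fin n) ℝ) (φ : Fin n → ℝ)
    (hPpos : ∀ i j, 0 ≤ P i j) (hProw : ∀ i, ∑ j, P i j = 1)
    (hφpos : ∀ i, 0 ≤ φ i) (hφsum : ∑ i, φ i = 1) (hφstat : φ ᵥ* P = φ)
    (hinv : IsUnit (1 - P + vecMulVec 1 φ).det) :
    Tendsto (fun α : ℝ => (1 - α • P)⁻¹ - (1 - α)⁻¹ • vecMulVec 1 φ)
      (nhdsWithin 1 (Set.Ico (0 : ℝ) 1))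
      (nhds ((1 - P + vecMulVec 1 φ)⁻¹ - vecMulVec 1 φ)) := by
  set Q : Matrix (Fin n) (Fin n) ℝ := vecMulVec 1 φ with hQdef
  have hPQ : P * Q = Q := by
    ext i j
    simp [hQdef, mul_apply, vecMulVec_apply, ← Finset.sum_mul, hProw]
  have hQP : Q * P = Q := by
    ext i j
    have := congrFun hφstat j
    simpa [hQdef, mul_apply, vecMulVec_apply, vecMul, dotProduct] using this
  have hQQ : Q * Q = Q := by
    ext i j
    simp [hQdef, mul_apply, vecMulVec_apply, ← Finset.sum_mul, hφsum]
  set A : ℝ → Matrix (Fin n) (Fin n) ℝ := fun α => 1 - α • P + α • Q with hAdef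
  have hA1 : A 1 = 1 - P + Q := by simp [hAdef]
  -- continuity of α ↦ (A α)⁻¹ at 1
  have hcontA : Continuous A := by
    apply Continuous.add
    · exact continuous_const.sub (continuous_id.smul continuous_const)
    · exact continuous_id.smul continuous_const
  have hdetcont : Continuous fun α => (A α).det :=
    Continuous.matrix_det hcontA
  have hdet1 : (A 1).det ≠ 0 := by
    rw [hA1]; exact isUnit_iff_ne_zero.mp hinv
  have hinvcont : ContinuousAt (fun α => (A α)⁻¹) 1 := by
    apply ContinuousAt.comp _ hcontA.continuousAt
    apply continuousAt_matrix_inv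
    rw [Ring.inverse_eq_inv']
    exact continuousAt_inv₀ hdet1
  have hlim : Tendsto (fun α => (A α)⁻¹ - Q) (nhdsWithin 1 (Set.Ico (0:ℝ) 1))
      (nhds ((1 - P + Q)⁻¹ - Q)) := by
    have h : ContinuousAt (fun α => (A α)⁻¹ - Q) 1 := hinvcont.sub continuousAt_const
    have h2 := h.continuousWithinAt (s := Set.Ico (0:ℝ) 1)
    unfold ContinuousWithinAt at h2
    simpa [hA1] using h2
  refine hlim.congr' ?_
  -- eventually det (A α) ≠ 0 and α ≠ 1
  have hev : ∀ᶠ α in nhdsWithin 1 (Set.Ico (0:ℝ) 1), (A α).det ≠ 0 := by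
    apply eventually_nhdsWithin_of_eventually_nhds
    exact hdetcont.continuousAt.eventually_ne hdet1
  filter_upwards [hev, self_mem_nhdsWithin] with α hdet hα
  have hα1 : α ≠ 1 := ne_of_lt hα.2
  have hQA : Q * A α = Q := by
    rw [hAdef]
    simp only [mul_add, mul_sub, mul_one, Matrix.mul_smul, hQP, hQQ]
    abel
  have hQAinv : Q * (A α)⁻¹ = Q := by
    calc Q * (A α)⁻¹ = Q * A α * (A α)⁻¹ := by rw [hQA]
    _ = Q * (A α * (A α)⁻¹) := by rw [Matrix.mul_assoc]
    _ = Q := by rw [Matrix.mul_nonsing_inv _ (isUnit_iff_ne_zero.mpr hdet), Matrix.mul_one]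
  have hc : (1 - α) ≠ 0 := sub_ne_zero.mpr (Ne.symm hα1)
  have key : (1 - α • P)⁻¹ = (A α)⁻¹ + (α * (1 - α)⁻¹) • Q := by
    apply Matrix.inv_eq_right_inv
    have h1 : (1 - α • P) * (A α)⁻¹ = 1 - α • Q := by
      have : (1 - α • P) = A α - α • Q := by rw [hAdef]; exact (add_sub_cancel_right _ _).symm
      rw [this, Matrix.sub_mul, Matrix.smul_mul, hQAinv,
        Matrix.mul_nonsing_inv _ (isUnit_iff_ne_zero.mpr hdet)]
    have h2 : (1 - α • P) * Q = (1 - α) • Q := by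
      rw [Matrix.sub_mul, Matrix.smul_mul, hPQ, Matrix.one_mul, sub_smul, one_smul]
    rw [Matrix.mul_add, h1, Matrix.mul_smul, h2, smul_smul, mul_assoc,
      inv_mul_cancel₀ hc, mul_one, sub_add_cancel]
  have hd : α * (1 - α)⁻¹ - (1 - α)⁻¹ = -1 := by field_simp; ring
  rw [key, add_sub_assoc, ← sub_smul, hd, neg_one_smul, ← sub_eq_add_neg]
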